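/- The Gaussian isoperimetric profile satisfies I(s) ≥ √(2/π) · (1/2 - 2(1/2 - s)^2) for all s ∈ [0,1]. -/

import Mathlib

open Real

noncomputable def gaussPhi (x : ℝ) : ℝ := (Real.sqrt (2 * Real.pi))⁻¹ * Real.exp (-x ^ 2 / 2)

noncomputable def gaussCDF (x : ℝ) : ℝ := ∫ t in Set.Iic x, gaussPhi t

noncomputable def isoProfile (s : ℝ) : ℝ :=
  if s = 0 ∨ s = 1 then 0 else gaussPhi (Function.invFun gaussCDF s)

section Aux
open MeasureTheory intervalIntegral Set Filter

noncomputable def gaussE (x : ℝ) : ℝ := ∫ t in (0:ℝ)..x, Real.exp (-t ^ 2 / 2)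

noncomputable def gaussH (y : ℝ) : ℝ :=
  ∫ t in (0:ℝ)..1, Real.exp (-(y ^ 2 * (1 + t ^ 2)) / 2) / (1 + t ^ 2)

lemma gaussPhi_pos (x : ℝ) : 0 < gaussPhi x := by
  unfold gaussPhi
  positivity

lemma continuous_exp_neg_sq : Continuous fun t : ℝ => Real.exp (-t ^ 2 / 2) := by
  continuity

lemma integrable_gaussPhi : MeasureTheory.Integrable gaussPhi := by
  have h : gaussPhi = fun x => (Real.sqrt (2 * Real.pi))⁻¹ * Real.exp (-(1/2) * x ^ 2) := by
    funext x; unfold gaussPhi; ring_nf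
  rw [h]
  exact (integrable_exp_neg_mul_sq (by norm_num)).const_mul _

lemma integral_gaussPhi : ∫ x, gaussPhi x = 1 := by
  have h : ∀ x : ℝ, gaussPhi x = (Real.sqrt (2 * Real.pi))⁻¹ * Real.exp (-(1/2) * x ^ 2) := by
    intro x; unfold gaussPhi; ring_nf
  rw [MeasureTheory.integral_congr_ae (Filter.Eventually.of_forall h),
    MeasureTheory.integral_const_mul, integral_gaussian]
  rw [show Real.pi / (1/2) = 2 * Real.pi by ring]
  rw [inv_mul_cancel₀]
  positivity

lemma hasDerivAt_gaussE (x : ℝ) : HasDerivAt gaussE (Real.exp (-x ^ 2 / 2)) x := by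
  exact intervalIntegral.integral_hasDerivAt_right
    (continuous_exp_neg_sq.intervalIntegrable _ _)
    (continuous_exp_neg_sq.stronglyMeasurableAtFilter _ _)
    continuous_exp_neg_sq.continuousAt

lemma continuous_gaussE : Continuous gaussE := by
  have h : Differentiable ℝ gaussE := fun x => (hasDerivAt_gaussE x).differentiableAt
  exact h.continuous

lemma contHaux (y : ℝ) :
    Continuous fun t : ℝ => Real.exp (-(y ^ 2 * (1 + t ^ 2)) / 2) / (1 + t ^ 2) := by
  apply Continuous.div (by continuity) (by continuity)
  intro t; positivity

lemma contHaux' : Continuous fun t : ℝ => 1 / (1 + t ^ 2) := by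
  apply Continuous.div continuous_const (by continuity)
  intro t; positivity

lemma hasDerivAt_gaussH (y : ℝ) :
    HasDerivAt gaussH (-(Real.exp (-y ^ 2 / 2) * gaussE y)) y := by
  have key : HasDerivAt gaussH
      (∫ t in (0:ℝ)..1, -y * Real.exp (-(y ^ 2 * (1 + t ^ 2)) / 2)) y := by
    have := intervalIntegral.hasDerivAt_integral_of_dominated_loc_of_deriv_le
      (F := fun y t => Real.exp (-(y ^ 2 * (1 + t ^ 2)) / 2) / (1 + t ^ 2))
      (F' := fun y t => -y * Real.exp (-(y ^ 2 * (1 + t ^ 2)) / 2))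
      (x₀ := y) (a := 0) (b := 1) (bound := fun _ => |y| + 1) (s := Metric.ball y 1)
      (Metric.ball_mem_nhds y one_pos)
      (Filter.Eventually.of_forall fun x => (contHaux x).aestronglyMeasurable)
      ((contHaux y).intervalIntegrable _ _)
      (Continuous.aestronglyMeasurable (by continuity))
      (Filter.Eventually.of_forall fun t _ x hx => ?_)
      ((continuous_const.intervalIntegrable (μ := MeasureTheory.volume) 0 1))
      (Filter.Eventually.of_forall fun t _ x _ => ?_)
    · exact this.2
    · rw [norm_mul, norm_neg, Real.norm_eq_abs, Real.norm_eq_abs, Real.abs_exp]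
      have hx' : |x - y| < 1 := by simpa [Metric.mem_ball, Real.dist_eq] using hx
      have h1 : |x| ≤ |y| + 1 := by
        have := abs_sub_abs_le_abs_sub x y
        linarith
      have h2 : Real.exp (-(x ^ 2 * (1 + t ^ 2)) / 2) ≤ 1 := by
        apply Real.exp_le_one_iff.mpr
        nlinarith [sq_nonneg x, sq_nonneg t]
      nlinarith [abs_nonneg x, Real.exp_pos (-(x ^ 2 * (1 + t ^ 2)) / 2)]
    · have h1 : HasDerivAt (fun x : ℝ => -(x ^ 2 * (1 + t ^ 2)) / 2)
          (-x * (1 + t ^ 2)) x := by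
        have : HasDerivAt (fun x : ℝ => x ^ 2) (2 * x) x := by
          simpa using (hasDerivAt_pow 2 x)
        have : HasDerivAt (fun y : ℝ => -(1 + t ^ 2) / 2 * y ^ 2) _ x := ((this.const_mul (-(1 + t ^ 2) / 2)))
        convert this using 1 <;> ring_nf
        · funext z; ring
      have h2 : HasDerivAt (fun x => Real.exp (-(x ^ 2 * (1 + t ^ 2)) / 2) / (1 + t ^ 2)) _ x := (h1.exp).div_const (1 + t ^ 2)
      refine h2.congr_deriv ?_
      have ht : (1 : ℝ) + t ^ 2 ≠ 0 := by positivity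
      field_simp
  convert key using 1
  rcases eq_or_ne y 0 with rfl | hy
  · simp [gaussE]
  · have h1 : ∀ t : ℝ, -y * Real.exp (-(y ^ 2 * (1 + t ^ 2)) / 2)
        = (-y * Real.exp (-y ^ 2 / 2)) * Real.exp (-(y * t) ^ 2 / 2) := by
      intro t
      rw [mul_assoc, ← Real.exp_add]
      ring_nf
    rw [intervalIntegral.integral_congr (g := fun t => (-y * Real.exp (-y ^ 2 / 2)) *
        Real.exp (-(y * t) ^ 2 / 2)) (fun t _ => h1 t)]
    rw [intervalIntegral.integral_const_mul]
    have h2 : (∫ t in (0:ℝ)..1, Real.exp (-(y * t) ^ 2 / 2))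
        = y⁻¹ * gaussE y := by
      have := intervalIntegral.integral_comp_mul_left
        (f := fun u => Real.exp (-u ^ 2 / 2)) (a := 0) (b := 1) (c := y) hy
      simpa [gaussE, mul_comm, smul_eq_mul] using this
    rw [h2]
    field_simp

lemma gaussH_zero : gaussH 0 = Real.pi / 4 := by
  unfold gaussH
  have : ∀ t ∈ Set.uIcc (0:ℝ) 1, Real.exp (-(0 ^ 2 * (1 + t ^ 2)) / 2) / (1 + t ^ 2)
      = 1 / (1 + t ^ 2) := by
    intro t _; norm_num
  rw [intervalIntegral.integral_congr this, integral_one_div_one_add_sq]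
  simp [Real.arctan_one]

lemma gaussE_sq_identity (x : ℝ) : gaussE x ^ 2 + 2 * gaussH x = Real.pi / 2 := by
  have hd : ∀ y : ℝ, HasDerivAt (fun y => gaussE y ^ 2 + 2 * gaussH y) 0 y := by
    intro y
    have h1 := ((hasDerivAt_gaussE y).fun_pow 2)
    have h2 := (hasDerivAt_gaussH y).const_mul 2
    have : HasDerivAt (fun y => gaussE y ^ 2 + 2 * gaussH y) _ y := h1.add h2
    convert this using 1
    ring
  have hconst : ∀ y : ℝ, gaussE y ^ 2 + 2 * gaussH y = gaussE 0 ^ 2 + 2 * gaussH 0 := by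
    intro y
    exact is_const_of_deriv_eq_zero (fun z => (hd z).differentiableAt)
      (fun z => (hd z).deriv) y 0
  rw [hconst x, gaussH_zero]
  simp [gaussE]
  ring

lemma gaussH_le (y : ℝ) : gaussH y ≤ Real.pi / 4 * Real.exp (-y ^ 2 / 2) := by
  have h1 : gaussH y ≤ ∫ t in (0:ℝ)..1, Real.exp (-y ^ 2 / 2) * (1 / (1 + t ^ 2)) := by
    apply intervalIntegral.integral_mono_on (by norm_num)
    · exact (contHaux y).intervalIntegrable _ _
    · exact ((continuous_const.mul contHaux')).intervalIntegrable _ _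
    · intro t ht
      rw [div_eq_mul_one_div]
      apply mul_le_mul_of_nonneg_right _ (by positivity)
      apply Real.exp_le_exp.mpr
      nlinarith [sq_nonneg y, sq_nonneg t, sq_nonneg (y * t)]
  rw [intervalIntegral.integral_const_mul, integral_one_div_one_add_sq] at h1
  simp [Real.arctan_one] at h1
  linarith
lemma key_ineq (x : ℝ) :
    Real.pi / 2 * (1 - Real.exp (-x ^ 2 / 2)) ≤ gaussE x ^ 2 := by
  have := gaussE_sq_identity x
  have := gaussH_le x
  nlinarith

lemma gaussCDF_zero : gaussCDF 0 = 1 / 2 := by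
  have hsymm : (∫ t in Set.Iic (0:ℝ), gaussPhi t) = ∫ t in Set.Ioi (0:ℝ), gaussPhi t := by
    have h1 : (∫ t in Set.Iic (0:ℝ), gaussPhi t) = ∫ t in Set.Iic (0:ℝ), gaussPhi (-t) := by
      apply MeasureTheory.setIntegral_congr_fun measurableSet_Iic
      intro t _
      unfold gaussPhi
      ring_nf
    rw [h1, integral_comp_neg_Iic, neg_zero]
  have hadd : (∫ t in Set.Iic (0:ℝ), gaussPhi t) + (∫ t in Set.Ioi (0:ℝ), gaussPhi t) = 1 := by
    rw [intervalIntegral.integral_Iic_add_Ioi integrable_gaussPhi.integrableOn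
      integrable_gaussPhi.integrableOn, integral_gaussPhi]
  unfold gaussCDF
  linarith [hsymm, hadd]

set_option maxHeartbeats 1000000 in
lemma gaussCDF_eq (x : ℝ) :
    gaussCDF x = 1 / 2 + (Real.sqrt (2 * Real.pi))⁻¹ * gaussE x := by
  have h1 : gaussCDF x - gaussCDF 0 = ∫ t in (0:ℝ)..x, gaussPhi t := by
    exact intervalIntegral.integral_Iic_sub_Iic integrable_gaussPhi.integrableOn
      integrable_gaussPhi.integrableOn
  have h2 : (∫ t in (0:ℝ)..x, gaussPhi t)
      = (Real.sqrt (2 * Real.pi))⁻¹ * gaussE x := by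
    unfold gaussPhi gaussE
    rw [intervalIntegral.integral_const_mul]
  rw [gaussCDF_zero] at h1
  linarith [h1, h2]

lemma continuous_gaussCDF : Continuous gaussCDF := by
  have : gaussCDF = fun x => 1 / 2 + (Real.sqrt (2 * Real.pi))⁻¹ * gaussE x := by
    funext x; exact gaussCDF_eq x
  rw [this]
  exact continuous_const.add (continuous_const.mul continuous_gaussE)

lemma mem_range_gaussCDF {s : ℝ} (h0 : 0 < s) (h1 : s < 1) : s ∈ Set.range gaussCDF := by
  have htop : Tendsto gaussCDF atTop (nhds 1) := by
    have := (MeasureTheory.aecover_Iic (μ := MeasureTheory.volume) (l := atTop)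
      (b := fun x : ℝ => x) tendsto_id).integral_tendsto_of_countably_generated
      integrable_gaussPhi
    rw [integral_gaussPhi] at this
    exact this
  have hbot : Tendsto gaussCDF atBot (nhds 0) := by
    have hIoi : Tendsto (fun x : ℝ => ∫ t in Set.Ioi x, gaussPhi t) atBot (nhds 1) := by
      have := (MeasureTheory.aecover_Ioi (μ := MeasureTheory.volume) (l := atBot)
        (a := fun x : ℝ => x) tendsto_id).integral_tendsto_of_countably_generated
        integrable_gaussPhi
      rw [integral_gaussPhi] at this
      exact this
    have heq : ∀ x : ℝ, gaussCDF x = 1 - ∫ t in Set.Ioi x, gaussPhi t := by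
      intro x
      have := intervalIntegral.integral_Iic_add_Ioi (b := x)
        integrable_gaussPhi.integrableOn integrable_gaussPhi.integrableOn
      rw [integral_gaussPhi] at this
      unfold gaussCDF
      linarith
    have h2 : Tendsto (fun x : ℝ => 1 - ∫ t in Set.Ioi x, gaussPhi t) atBot (nhds (1 - 1)) :=
      hIoi.const_sub 1
    rw [show (0:ℝ) = 1 - 1 by norm_num]
    exact h2.congr fun x => (heq x).symm
  obtain ⟨b, hb⟩ := (htop.eventually (eventually_gt_nhds h1)).exists
  obtain ⟨a, ha⟩ := (hbot.eventually (eventually_lt_nhds h0)).exists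
  exact intermediate_value_univ a b continuous_gaussCDF ⟨le_of_lt ha, le_of_lt hb⟩

end Aux

theorem stmt1 (s : ℝ) (hs : s ∈ Set.Icc (0:ℝ) 1) :
    Real.sqrt (2 / Real.pi) * (1/2 - 2 * (1/2 - s)^2) ≤ isoProfile s := by
  rcases eq_or_ne s 0 with rfl | hs0
  · norm_num [isoProfile]
  rcases eq_or_ne s 1 with rfl | hs1
  · norm_num [isoProfile]
  have h0 : 0 < s := lt_of_le_of_ne hs.1 (Ne.symm hs0)
  have h1 : s < 1 := lt_of_le_of_ne hs.2 hs1
  have hmem := mem_range_gaussCDF h0 h1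
  have hx : gaussCDF (Function.invFun gaussCDF s) = s := Function.invFun_eq hmem
  set x := Function.invFun gaussCDF s with hxdef
  have hiso : isoProfile s = gaussPhi x := by
    unfold isoProfile
    rw [if_neg (by push_neg; exact ⟨hs0, hs1⟩)]
  rw [hiso]
  have hcdf := gaussCDF_eq x
  rw [hx] at hcdf
  -- s = 1/2 + c * E x, c = (√(2π))⁻¹
  set c : ℝ := (Real.sqrt (2 * Real.pi))⁻¹ with hc
  have hpi : (0:ℝ) < Real.pi := Real.pi_pos
  have hsq : Real.sqrt (2 * Real.pi) ^ 2 = 2 * Real.pi := Real.sq_sqrt (by positivity)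
  have hcpos : 0 < c := by rw [hc]; positivity
  have hroot : Real.sqrt (2 / Real.pi) = 2 * c := by
    rw [hc]
    rw [show (2 : ℝ) / Real.pi = (2 * Real.pi)⁻¹ * 2 ^ 2 by field_simp]
    rw [Real.sqrt_mul (by positivity), Real.sqrt_sq (by norm_num),
      Real.sqrt_inv]
    ring
  have hkey := key_ineq x
  have hc2 : c ^ 2 = (2 * Real.pi)⁻¹ := by
    rw [hc, ← Real.sqrt_inv]
    exact Real.sq_sqrt (by positivity)
  unfold gaussPhi
  rw [hroot, hcdf]
  have hE : (1/2 - (1/2 + c * gaussE x)) = -(c * gaussE x) := by ring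
  rw [hE]
  have hgoal : 2 * c * (1/2 - 2 * (c * gaussE x) ^ 2) ≤ c * Real.exp (-x ^ 2 / 2) := by
    have hc2' : c ^ 2 * (2 * Real.pi) = 1 := by rw [hc2]; field_simp
    have h5 : 2 * c * (1/2 - 2 * (c * gaussE x) ^ 2)
        = c * (1 - 2 / Real.pi * gaussE x ^ 2) := by
      linear_combination (-(2 * c * gaussE x ^ 2 / Real.pi)) * hc2'
        + (4 * c ^ 3 * gaussE x ^ 2) * (mul_inv_cancel₀ hpi.ne')
    have h6 : 1 - Real.exp (-x ^ 2 / 2) ≤ 2 / Real.pi * gaussE x ^ 2 := by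
      rw [div_mul_eq_mul_div, le_div_iff₀ hpi]
      nlinarith [hkey]
    rw [h5]
    have := mul_le_mul_of_nonneg_left h6 (le_of_lt hcpos)
    nlinarith [this]
  calc 2 * c * (1/2 - 2 * (-(c * gaussE x)) ^ 2)
      = 2 * c * (1/2 - 2 * (c * gaussE x) ^ 2) := by ring
    _ ≤ c * Real.exp (-x ^ 2 / 2) := hgoal
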